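/- Counting lemma for staircase paths: for z ∈ n^{−1}ℤ^d, 1 ≤ i ≤ d, and fixed k ∈ n^{−1}ℤ^d, the number of points x ∈ n^{−1}ℤ^d such that x + n^{−1}𝒫(nk) contains the line segment from z to z + n^{−1}e^i is at most n|k_i|, where 𝒫(k) is the staircase path from 0 to k consisting of axis-parallel segments taken in coordinate order. -/

import Mathlib

/-- Counting lemma for staircase paths: for fixed `z, k ∈ n⁻¹ℤ^d` and a
coordinate `i`, the set of points `x ∈ n⁻¹ℤ^d` such that `x + n⁻¹𝒫(nk)`
contains the segment from `z` to `z + n⁻¹eⁱ` — equivalently,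
`(x+k)_l = z_l` for `l < i`, `x_l = z_l` for `l > i`, and
`z_i ∈ [min(x_i, (x+k)_i), max(x_i, (x+k)_i))` — has cardinality at most
`n |k_i|`. -/
theorem staircase_counting (d n : ℕ) (hn : 0 < n) (i : Fin d)
    (k z : Fin d → ℚ)
    (hk : ∀ j, ∃ m : ℤ, k j = (m : ℚ) / n)
    (hz : ∀ j, ∃ m : ℤ, z j = (m : ℚ) / n) :
    Set.Finite {x : Fin d → ℚ |
        (∀ j, ∃ m : ℤ, x j = (m : ℚ) / n) ∧
        (∀ l, l < i → x l + k l = z l) ∧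
        (∀ l, i < l → x l = z l) ∧
        min (x i) (x i + k i) ≤ z i ∧ z i < max (x i) (x i + k i)} ∧
      (Nat.card {x : Fin d → ℚ |
        (∀ j, ∃ m : ℤ, x j = (m : ℚ) / n) ∧
        (∀ l, l < i → x l + k l = z l) ∧
        (∀ l, i < l → x l = z l) ∧
        min (x i) (x i + k i) ≤ z i ∧ z i < max (x i) (x i + k i)} : ℚ)
        ≤ (n : ℚ) * |k i| := by
  obtain ⟨m, hm⟩ := hk i
  obtain ⟨Z, hZ⟩ := hz i
  have hn' : (0:ℚ) < n := by exact_mod_cast hn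
  set base : Fin d → ℚ := fun j => if j < i then z j - k j else z j with hbase
  set F : Finset (Fin d → ℚ) :=
    (Finset.Ico (min 0 m) (max 0 m)).image
      (fun t => Function.update base i (((Z - t : ℤ) : ℚ)/n)) with hF
  have hsub : {x : Fin d → ℚ |
        (∀ j, ∃ m : ℤ, x j = (m : ℚ) / n) ∧
        (∀ l, l < i → x l + k l = z l) ∧
        (∀ l, i < l → x l = z l) ∧
        min (x i) (x i + k i) ≤ z i ∧ z i < max (x i) (x i + k i)} ⊆ ↑F := by
    rintro x ⟨hx1, hx2, hx3, hx4, hx5⟩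
    obtain ⟨a, ha⟩ := hx1 i
    rw [ha, hm, hZ] at hx4 hx5
    have h4 : min a (a + m) ≤ Z := by
      have : min ((a:ℚ)/n) ((a:ℚ)/n + m/n) = (min a (a+m) : ℤ) / n := by
        push_cast
        rw [← add_div, min_div_div_right (le_of_lt hn')]
      rw [this] at hx4
      exact_mod_cast (div_le_div_iff_of_pos_right hn').mp hx4
    have h5 : Z < max a (a + m) := by
      have : max ((a:ℚ)/n) ((a:ℚ)/n + m/n) = (max a (a+m) : ℤ) / n := by
        push_cast
        rw [← add_div, max_div_div_right (le_of_lt hn')]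
      rw [this] at hx5
      exact_mod_cast (div_lt_div_iff_of_pos_right hn').mp hx5
    simp only [hF, Finset.coe_image, Set.mem_image, Finset.mem_coe, Finset.mem_Ico]
    refine ⟨Z - a, ⟨?_, ?_⟩, ?_⟩
    · omega
    · omega
    · funext j
      rcases lt_trichotomy j i with h | h | h
      · rw [Function.update_of_ne (ne_of_lt h), hbase]
        simp only [if_pos h]
        have := hx2 j h
        linarith
      · subst h
        rw [Function.update_self]
        rw [ha]
        norm_num
      · rw [Function.update_of_ne (ne_of_gt h), hbase]
        simp only [if_neg (not_lt_of_gt h)]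
        exact (hx3 j h).symm
  refine ⟨Set.Finite.subset F.finite_toSet hsub, ?_⟩
  have hcard : Nat.card {x : Fin d → ℚ |
        (∀ j, ∃ m : ℤ, x j = (m : ℚ) / n) ∧
        (∀ l, l < i → x l + k l = z l) ∧
        (∀ l, i < l → x l = z l) ∧
        min (x i) (x i + k i) ≤ z i ∧ z i < max (x i) (x i + k i)} ≤ m.natAbs := by
    have h1 := Nat.card_mono F.finite_toSet hsub
    simp only [Nat.card_coe_set_eq, Set.ncard_coe_finset] at h1 ⊢
    refine h1.trans ?_
    refine (Finset.card_image_le).trans ?_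
    rw [Int.card_Ico]
    clear_value base F
    clear hsub h1 hbase hF
    rcases le_total 0 m with h | h
    · rw [min_eq_left h, max_eq_right h]; omega
    · rw [min_eq_right h, max_eq_left h]; omega
  have heq : (n : ℚ) * |k i| = (m.natAbs : ℚ) := by
    rw [hm, abs_div, abs_of_pos hn']
    rw [mul_div_cancel₀ _ (ne_of_gt hn')]
    rw [Nat.cast_natAbs]
    push_cast
    ring
  rw [heq]
  exact_mod_cast hcard
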